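/- Let C be a Krull-Schmidt category with local descending chain condition on ideals. Then every idempotent ideal of C is generated by a set of identity morphisms if and only if the transfinite radical rad_C* is zero. -/

import Mathlib

open CategoryTheory CategoryTheory.Limits

universe w v u

structure CatIdeal (C : Type u) [Category.{v} C] [Preadditive C] where
  mem : ∀ {X Y : C}, (X ⟶ Y) → Prop
  zero_mem : ∀ {X Y : C}, mem (0 : X ⟶ Y)
  add_mem : ∀ {X Y : C} {f g : X ⟶ Y}, mem f → mem g → mem (f + g)
  comp_mem_left : ∀ {X Y Z : C} {f : X ⟶ Y} (g : Y ⟶ Z), mem f → mem (f ≫ g)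
  comp_mem_right : ∀ {X Y Z : C} (f : X ⟶ Y) {g : Y ⟶ Z}, mem g → mem (f ≫ g)

namespace CatIdeal

variable {C : Type u} [Category.{v} C] [Preadditive C]

instance : LE (CatIdeal C) :=
  ⟨fun I J => ∀ {X Y : C} {f : X ⟶ Y}, I.mem f → J.mem f⟩

/-- The ideal of all morphisms. -/
def top (C : Type u) [Category.{v} C] [Preadditive C] : CatIdeal C where
  mem _ := True
  zero_mem := trivial
  add_mem := by intros; trivial
  comp_mem_left := by intros; trivial
  comp_mem_right := by intros; trivial

/-- The ideal generated by a class of morphisms. -/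
def span (S : ∀ {X Y : C}, (X ⟶ Y) → Prop) : CatIdeal C where
  mem f := ∀ J : CatIdeal C, (∀ {A B : C} {g : A ⟶ B}, S g → J.mem g) → J.mem f
  zero_mem := fun J _ => J.zero_mem
  add_mem := by intro X Y f g hf hg J hS; exact J.add_mem (hf J hS) (hg J hS)
  comp_mem_left := by intro X Y Z f g hf J hS; exact J.comp_mem_left g (hf J hS)
  comp_mem_right := by intro X Y Z f g hg J hS; exact J.comp_mem_right f (hg J hS)

/-- The product of two ideals: the ideal generated by all composites `g ≫ h`
with `g ∈ I` and `h ∈ J`. -/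
def mul (I J : CatIdeal C) : CatIdeal C :=
  span (fun {X Z} f => ∃ (Y : C) (g : X ⟶ Y) (h : Y ⟶ Z), I.mem g ∧ J.mem h ∧ f = g ≫ h)

/-- An ideal is idempotent if it equals its square. -/
def IsIdempotent (I : CatIdeal C) : Prop := I = I.mul I

/-- The intersection of a family of ideals. -/
def iInter {ι : Sort*} (F : ι → CatIdeal C) : CatIdeal C where
  mem f := ∀ i, (F i).mem f
  zero_mem := fun i => (F i).zero_mem
  add_mem := by intro X Y f g hf hg i; exact (F i).add_mem (hf i) (hg i)
  comp_mem_left := by intro X Y Z f g hf i; exact (F i).comp_mem_left g (hf i)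
  comp_mem_right := by intro X Y Z f g hg i; exact (F i).comp_mem_right f (hg i)

/-- Finite powers of an ideal: `npow I n` is the ideal generated by `n`-fold
composites of morphisms from `I` (with `npow I 0` the ideal of all morphisms). -/
def npow (I : CatIdeal C) : ℕ → CatIdeal C
  | 0 => top C
  | n + 1 => (npow I n).mul I

/-- The largest limit-or-zero ordinal `≤ α`, namely `ω * (α / ω)`. -/
noncomputable def limitPart (α : Ordinal.{w}) : Ordinal.{w} :=
  Ordinal.omega0 * (α / Ordinal.omega0)

theorem limitPart_lt {α : Ordinal.{w}} (h0 : α ≠ 0) (hl : ¬ Order.IsSuccLimit α) :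
    limitPart α < α := by
  have hle : limitPart α ≤ α := Ordinal.mul_div_le α Ordinal.omega0
  rcases lt_or_eq_of_le hle with h | h
  · exact h
  · exfalso
    rcases eq_or_ne (α / Ordinal.omega0) 0 with hq | hq
    · exact h0 (by rw [← h]; simp [limitPart, hq])
    · exact hl (by rw [← h]; exact Ordinal.isSuccLimit_mul_left Ordinal.isSuccLimit_omega0 (pos_iff_ne_zero.2 hq))

end CatIdeal

open Ordinal Classical in
/-- Transfinite powers of an ideal `I`: `tpow I 0` is the ideal of all morphisms,
`tpow I n` (for finite `n ≥ 1`) is the ideal generated by `n`-fold composites of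
morphisms from `I`, `tpow I α = ⋂_{β < α} tpow I β` at limit ordinals `α`, and
`tpow I (β + n) = (tpow I β) ^ (n + 1)` for `β` limit and `1 ≤ n < ω`. -/
noncomputable def CatIdeal.tpow {C : Type u} [Category.{v} C] [Preadditive C]
    (I : CatIdeal C) : Ordinal.{w} → CatIdeal C
  | α =>
    if h0 : α = 0 then CatIdeal.top C
    else if hl : Order.IsSuccLimit α then
      CatIdeal.iInter (fun β : {β : Ordinal.{w} // β < α} =>
        have := β.2
        CatIdeal.tpow I β.1)
    else
      (have : Ordinal.pred α < α :=
        Ordinal.pred_lt_iff_not_isSuccPrelimit.2 (fun hp => hl ⟨fun hm => h0 (hm.eq_bot.trans Ordinal.bot_eq_zero), hp⟩)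
       CatIdeal.tpow I (Ordinal.pred α)).mul
        (if Ordinal.omega0 ≤ α then
          have := CatIdeal.limitPart_lt h0 hl
          CatIdeal.tpow I (CatIdeal.limitPart α)
         else I)
  termination_by α => α

namespace CatIdeal

/-- The intersection `I* = ⋂_α I^α` of all transfinite powers of `I`. -/
noncomputable def tstar {C : Type u} [Category.{v} C] [Preadditive C] (I : CatIdeal C) : CatIdeal C :=
  iInter (fun α : Ordinal.{v} => tpow I α)

end CatIdeal

section KS

open CategoryTheory CategoryTheory.Limits

variable (C : Type u) [Category.{v} C] [Preadditive C]

/-- `X` is a biproduct (finite direct sum) of the finite family `Y`,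
witnessed by projections and inclusions. -/
def IsBiproductOf (X : C) {n : ℕ} (Y : Fin n → C) : Prop :=
  ∃ (p : ∀ i, X ⟶ Y i) (s : ∀ i, Y i ⟶ X),
    (∀ i, s i ≫ p i = 𝟙 (Y i)) ∧ (∀ i j, i ≠ j → s i ≫ p j = 0) ∧
    (∑ i, p i ≫ s i) = 𝟙 X

/-- An object is indecomposable if it is nonzero and has no idempotent endomorphisms
other than `0` and the identity (i.e. it admits no nontrivial direct sum decomposition). -/
def IsIndecomposableObj (X : C) : Prop :=
  ¬ IsZero X ∧ ∀ e : X ⟶ X, e ≫ e = e → e = 0 ∨ e = 𝟙 X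

/-- The radical of a Krull-Schmidt category: the ideal generated by all non-invertible
morphisms between indecomposable objects. -/
def catRadical : CatIdeal C :=
  CatIdeal.span (fun {X Y} f => IsIndecomposableObj C X ∧ IsIndecomposableObj C Y ∧ ¬ IsIso f)

/-- The transfinite radical `rad_C* = ⋂_α rad_C^α`. -/
noncomputable def catTransRadical : CatIdeal C := CatIdeal.tstar (catRadical C)

/-- A Krull-Schmidt category: every object decomposes as a finite direct sum of objects
with local endomorphism rings. -/
def IsKrullSchmidt : Prop :=
  ∀ X : C, ∃ (n : ℕ) (Y : Fin n → C),
    (∀ i, IsLocalRing (End (Y i))) ∧ IsBiproductOf C X Y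

/-- Local descending chain condition on ideals: every descending chain of ideals,
evaluated at any fixed pair of objects, stabilizes. -/
def HasLocalDCC : Prop :=
  ∀ (I : ℕ → CatIdeal C), (∀ n, I (n + 1) ≤ I n) →
    ∀ X Y : C, ∃ n, ∀ m, n ≤ m → ∀ f : X ⟶ Y, (I m).mem f ↔ (I n).mem f

/-- The ideal generated by the identity morphisms of the objects in `S`. -/
def identityIdeal (S : Set C) : CatIdeal C :=
  CatIdeal.span (fun {X Y} f => ∃ h : X = Y, X ∈ S ∧ f = CategoryTheory.eqToHom h)

/-- An ideal is zero if it consists exactly of the zero morphisms. -/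
def CatIdeal.IsZeroIdeal {C : Type u} [Category.{v} C] [Preadditive C] (I : CatIdeal C) : Prop :=
  ∀ {X Y : C} {f : X ⟶ Y}, I.mem f → f = 0

end KS


section AuxBasic
open CategoryTheory

namespace CatIdeal

variable {C : Type u} [Category.{v} C] [Preadditive C]

theorem le_def {I J : CatIdeal C} :
    I ≤ J ↔ ∀ (X Y : C) (f : X ⟶ Y), I.mem f → J.mem f :=
  ⟨fun h X Y f hf => h hf, fun h {X Y f} hf => h X Y f hf⟩

theorem ext' {I J : CatIdeal C} (h : ∀ (X Y : C) (f : X ⟶ Y), I.mem f ↔ J.mem f) : I = J := by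
  obtain ⟨mI, z1, a1, c1, d1⟩ := I
  obtain ⟨mJ, z2, a2, c2, d2⟩ := J
  have hm : @mI = @mJ := by
    funext X Y f
    exact propext (h X Y f)
  subst hm
  rfl

theorem le_rfl' (I : CatIdeal C) : I ≤ I := fun hf => hf

theorem le_trans' {I J K : CatIdeal C} (h1 : I ≤ J) (h2 : J ≤ K) : I ≤ K :=
  fun hf => h2 (h1 hf)

theorem le_antisymm' {I J : CatIdeal C} (h1 : I ≤ J) (h2 : J ≤ I) : I = J :=
  ext' fun _ _ _ => ⟨fun hf => h1 hf, fun hf => h2 hf⟩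

theorem subset_span {S : ∀ {X Y : C}, (X ⟶ Y) → Prop} {X Y : C} {f : X ⟶ Y} (hf : S f) :
    (span @S).mem f := fun _ hJ => hJ hf

theorem span_le {S : ∀ {X Y : C}, (X ⟶ Y) → Prop} {J : CatIdeal C}
    (h : ∀ {X Y : C} {f : X ⟶ Y}, S f → J.mem f) : span @S ≤ J :=
  fun hf => hf _ @h

theorem comp_mem_mul {I J : CatIdeal C} {X Y Z : C} {g : X ⟶ Y} {h : Y ⟶ Z}
    (hg : I.mem g) (hh : J.mem h) : (I.mul J).mem (g ≫ h) :=
  subset_span ⟨Y, g, h, hg, hh, rfl⟩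

theorem mul_le_left (I J : CatIdeal C) : I.mul J ≤ I :=
  span_le (by rintro X Y f ⟨Z, g, h, hg, hh, rfl⟩; exact I.comp_mem_left h hg)

theorem mul_le_right (I J : CatIdeal C) : I.mul J ≤ J :=
  span_le (by rintro X Y f ⟨Z, g, h, hg, hh, rfl⟩; exact J.comp_mem_right g hh)

theorem mul_mono {I I' J J' : CatIdeal C} (h1 : I ≤ I') (h2 : J ≤ J') :
    I.mul J ≤ I'.mul J' :=
  span_le (by rintro X Y f ⟨Z, g, h, hg, hh, rfl⟩; exact comp_mem_mul (h1 hg) (h2 hh))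

theorem top_mul (J : CatIdeal C) : (top C).mul J = J := by
  refine le_antisymm' (mul_le_right _ _) fun {X Y f} hf => ?_
  have := comp_mem_mul (I := top C) (g := 𝟙 X) trivial hf
  simpa using this

theorem mem_of_sum {I : CatIdeal C} {X Y : C} {ι : Type*} (s : Finset ι) (g : ι → (X ⟶ Y))
    (h : ∀ i ∈ s, I.mem (g i)) : I.mem (∑ i ∈ s, g i) := by
  classical
  induction s using Finset.induction_on with
  | empty => simpa using I.zero_mem
  | insert _ _ hx ih =>
    rw [Finset.sum_insert hx]
    exact I.add_mem (h _ (Finset.mem_insert_self _ _))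
      (ih fun i hi => h i (Finset.mem_insert_of_mem hi))

/-- The sum of two ideals. -/
def addI (I J : CatIdeal C) : CatIdeal C where
  mem f := ∃ g h, I.mem g ∧ J.mem h ∧ f = g + h
  zero_mem := ⟨0, 0, I.zero_mem, J.zero_mem, by simp⟩
  add_mem := by
    rintro X Y f f' ⟨g, h, hg, hh, rfl⟩ ⟨g', h', hg', hh', rfl⟩
    exact ⟨g + g', h + h', I.add_mem hg hg', J.add_mem hh hh', by abel⟩
  comp_mem_left := by
    rintro X Y Z f k ⟨g, h, hg, hh, rfl⟩
    exact ⟨g ≫ k, h ≫ k, I.comp_mem_left k hg, J.comp_mem_left k hh,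
      by rw [Preadditive.add_comp]⟩
  comp_mem_right := by
    rintro X Y Z k f ⟨g, h, hg, hh, rfl⟩
    exact ⟨k ≫ g, k ≫ h, I.comp_mem_right k hg, J.comp_mem_right k hh,
      by rw [Preadditive.comp_add]⟩

theorem le_addI_left (I J : CatIdeal C) : I ≤ I.addI J :=
  fun {X Y f} hf => ⟨f, 0, hf, J.zero_mem, by simp⟩

theorem le_addI_right (I J : CatIdeal C) : J ≤ I.addI J :=
  fun {X Y f} hf => ⟨0, f, I.zero_mem, hf, by simp⟩

theorem addI_le {I J K : CatIdeal C} (h1 : I ≤ K) (h2 : J ≤ K) : I.addI J ≤ K := by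
  rintro X Y f ⟨g, h, hg, hh, rfl⟩
  exact K.add_mem (h1 hg) (h2 hh)

theorem addI_mono_right {I J J' : CatIdeal C} (h : J ≤ J') : I.addI J ≤ I.addI J' :=
  addI_le (le_addI_left _ _) (le_trans' h (le_addI_right _ _))

/-- The intersection of two ideals. -/
def interI (I J : CatIdeal C) : CatIdeal C where
  mem f := I.mem f ∧ J.mem f
  zero_mem := ⟨I.zero_mem, J.zero_mem⟩
  add_mem := by
    rintro X Y f g ⟨h1, h2⟩ ⟨h3, h4⟩
    exact ⟨I.add_mem h1 h3, J.add_mem h2 h4⟩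
  comp_mem_left := by
    rintro X Y Z f g ⟨h1, h2⟩
    exact ⟨I.comp_mem_left g h1, J.comp_mem_left g h2⟩
  comp_mem_right := by
    rintro X Y Z f g ⟨h1, h2⟩
    exact ⟨I.comp_mem_right f h1, J.comp_mem_right f h2⟩

theorem interI_le_left (I J : CatIdeal C) : I.interI J ≤ I := fun hf => hf.1
theorem interI_le_right (I J : CatIdeal C) : I.interI J ≤ J := fun hf => hf.2
theorem le_interI {I J K : CatIdeal C} (h1 : K ≤ I) (h2 : K ≤ J) : K ≤ I.interI J :=
  fun hf => ⟨h1 hf, h2 hf⟩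

/-- The zero ideal. -/
def zeroI (C : Type u) [Category.{v} C] [Preadditive C] : CatIdeal C where
  mem f := f = 0
  zero_mem := rfl
  add_mem := by rintro X Y f g rfl rfl; simp
  comp_mem_left := by rintro X Y Z f g rfl; simp
  comp_mem_right := by rintro X Y Z f g rfl; simp

theorem mul_addI_sq (T K : CatIdeal C) :
    (T.addI K).mul (T.addI K) ≤ T.addI (K.mul K) := by
  refine span_le ?_
  rintro X Y f ⟨Z, u, v, ⟨g, h, hg, hh, rfl⟩, ⟨g', h', hg', hh', rfl⟩, rfl⟩
  refine ⟨g ≫ (g' + h') + h ≫ g', h ≫ h',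
    T.add_mem (T.comp_mem_left _ hg) (T.comp_mem_right _ hg'),
    comp_mem_mul hh hh', ?_⟩
  simp only [Preadditive.add_comp, Preadditive.comp_add]
  abel

theorem mem_iff_conj (I : CatIdeal C) {X X' Y Y' : C} (e : X ≅ X') (e' : Y ≅ Y')
    (f : X ⟶ Y) : I.mem f ↔ I.mem (e.inv ≫ f ≫ e'.hom) := by
  constructor
  · intro h
    exact I.comp_mem_right _ (I.comp_mem_left _ h)
  · intro h
    have := I.comp_mem_right e.hom (I.comp_mem_left e'.inv h)
    simpa using this

end CatIdeal
end AuxBasic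
section AuxTpow
open CategoryTheory Ordinal

namespace CatIdeal

variable {C : Type u} [Category.{v} C] [Preadditive C]

theorem tpow_zero (I : CatIdeal C) : tpow.{w} I 0 = top C := by
  rw [tpow]
  simp

theorem tpow_limit (I : CatIdeal C) {α : Ordinal.{w}} (hα : Order.IsSuccLimit α) :
    tpow I α = iInter (fun β : {β : Ordinal.{w} // β < α} => tpow I β.1) := by
  rw [tpow]
  rw [dif_neg hα.pos.ne', dif_pos hα]

theorem tpow_succ (I : CatIdeal C) {α : Ordinal.{w}} (h0 : α ≠ 0) (hl : ¬ Order.IsSuccLimit α) :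
    tpow I α = (tpow I (Ordinal.pred α)).mul
      (if Ordinal.omega0 ≤ α then tpow I (limitPart α) else I) := by
  conv_lhs => rw [tpow]
  rw [dif_neg h0, dif_neg hl]

theorem tpow_one (I : CatIdeal C) : tpow.{w} I 1 = I := by
  rw [tpow_succ I one_ne_zero (by rw [← Ordinal.succ_zero]; exact Order.not_isSuccLimit_succ 0)]
  rw [if_neg (not_le.2 one_lt_omega0)]
  rw [show Ordinal.pred 1 = 0 by rw [← Ordinal.succ_zero, pred_succ]]
  rw [tpow_zero, top_mul]

theorem tpow_antitone (I : CatIdeal C) {α β : Ordinal.{w}} (h : β ≤ α) :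
    tpow I α ≤ tpow I β := by
  induction α using Ordinal.induction with
  | h α IH =>
    rcases eq_or_lt_of_le h with rfl | hlt
    · exact le_rfl' _
    rcases Ordinal.zero_or_succ_or_isSuccLimit α with rfl | ⟨a, rfl⟩ | hlim
    · exact absurd hlt (not_lt_zero (a := β))
    · have h1 : tpow I (Order.succ a) ≤ tpow I a := by
        rw [tpow_succ I (succ_ne_zero a) (Order.not_isSuccLimit_succ a), pred_succ]
        exact mul_le_left _ _
      exact fun {X Y f} hf => IH a (Order.lt_succ a) (Order.lt_succ_iff.1 hlt) (h1 hf)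
    · rw [tpow_limit I hlim]
      exact fun {X Y f} hf => hf ⟨β, hlt⟩

theorem mem_tpow_limit {I : CatIdeal C} {α : Ordinal.{w}} (hα : Order.IsSuccLimit α)
    {X Y : C} {f : X ⟶ Y} (h : ∀ β < α, (tpow I β).mem f) : (tpow I α).mem f := by
  rw [tpow_limit I hα]
  exact fun β => h β.1 β.2

theorem tstar_le_tpow (I : CatIdeal C) (α : Ordinal.{v}) : tstar I ≤ tpow I α :=
  fun hf => hf α

end CatIdeal
end AuxTpow
section AuxRad
open CategoryTheory CategoryTheory.Limits

variable {C : Type u} [Category.{v} C] [Preadditive C]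

theorem one_sub_swap {X Y : C} (a : X ⟶ Y) (b : Y ⟶ X) (h : IsIso (𝟙 X - a ≫ b)) :
    IsIso (𝟙 Y - b ≫ a) := by
  set u := inv (𝟙 X - a ≫ b) with hu
  have h1 : u - a ≫ b ≫ u = 𝟙 X := by
    have := IsIso.hom_inv_id (𝟙 X - a ≫ b)
    rw [Preadditive.sub_comp, Category.id_comp, Category.assoc] at this
    exact this
  have h2 : u - u ≫ a ≫ b = 𝟙 X := by
    have := IsIso.inv_hom_id (𝟙 X - a ≫ b)
    rw [Preadditive.comp_sub, Category.comp_id] at this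
    exact this
  refine ⟨𝟙 Y + b ≫ u ≫ a, ?_, ?_⟩
  · have h1' : a ≫ b ≫ u = u - 𝟙 X := by rw [← h1]; abel
    have : b ≫ (a ≫ b ≫ u) ≫ a = b ≫ (u - 𝟙 X) ≫ a := by rw [h1']
    calc (𝟙 Y - b ≫ a) ≫ (𝟙 Y + b ≫ u ≫ a)
        = 𝟙 Y + b ≫ u ≫ a - b ≫ a - b ≫ (a ≫ b ≫ u) ≫ a := by
          simp only [Preadditive.sub_comp, Preadditive.comp_add, Category.id_comp,
            Category.comp_id, Category.assoc]
          abel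
      _ = 𝟙 Y + b ≫ u ≫ a - b ≫ a - b ≫ (u - 𝟙 X) ≫ a := by rw [this]
      _ = 𝟙 Y := by
          simp only [Preadditive.sub_comp, Preadditive.comp_sub, Category.id_comp]
          abel
  · have h2' : u ≫ a ≫ b = u - 𝟙 X := by rw [← h2]; abel
    have : b ≫ (u ≫ a ≫ b) ≫ a = b ≫ (u - 𝟙 X) ≫ a := by rw [h2']
    calc (𝟙 Y + b ≫ u ≫ a) ≫ (𝟙 Y - b ≫ a)
        = 𝟙 Y - b ≫ a + b ≫ u ≫ a - b ≫ (u ≫ a ≫ b) ≫ a := by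
          simp only [Preadditive.add_comp, Preadditive.comp_sub, Category.id_comp,
            Category.comp_id, Category.assoc]
          abel
      _ = 𝟙 Y - b ≫ a + b ≫ u ≫ a - b ≫ (u - 𝟙 X) ≫ a := by rw [this]
      _ = 𝟙 Y := by
          simp only [Preadditive.sub_comp, Preadditive.comp_sub, Category.id_comp]
          abel

/-- The "regular" ideal: `f` such that `𝟙 - f ≫ g` is invertible for every `g`. -/
def regIdeal (C : Type u) [Category.{v} C] [Preadditive C] : CatIdeal C where
  mem {X Y} f := ∀ g : Y ⟶ X, IsIso (𝟙 X - f ≫ g)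
  zero_mem := by
    intro X Y g
    simpa using (inferInstance : IsIso (𝟙 X))
  add_mem := by
    intro X Y f f' hf hf' g
    have hiso : IsIso (𝟙 X - f ≫ g) := hf g
    set u := inv (𝟙 X - f ≫ g)
    have h2 : u ≫ (𝟙 X - f ≫ g) = 𝟙 X := IsIso.inv_hom_id _
    have hiso' : IsIso (𝟙 X - f' ≫ g ≫ u) := hf' (g ≫ u)
    have key : 𝟙 X - (f + f') ≫ g = (𝟙 X - f' ≫ g ≫ u) ≫ (𝟙 X - f ≫ g) := by
      rw [Preadditive.sub_comp, Category.id_comp, Category.assoc, Category.assoc, h2,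
        Category.comp_id, Preadditive.add_comp]
      abel
    rw [key]
    infer_instance
  comp_mem_left := by
    intro X Y Z f h hf g
    have := hf (h ≫ g)
    rwa [← Category.assoc] at this
  comp_mem_right := by
    intro X Y Z f g hg k
    have h1 : IsIso (𝟙 Y - (g ≫ k) ≫ f) := by
      have := hg (k ≫ f)
      rwa [← Category.assoc] at this
    have h2 := one_sub_swap (g ≫ k) f h1
    rw [Category.assoc]
    exact h2

end AuxRad
section AuxLocal
open CategoryTheory CategoryTheory.Limits

variable {C : Type u} [Category.{v} C] [Preadditive C]

theorem localRing_unit_or_unit {R : Type*} [Ring R] [IsLocalRing R] (a : R) :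
    IsUnit a ∨ IsUnit (1 - a) :=
  IsLocalRing.isUnit_or_isUnit_of_add_one (by abel)

theorem localRing_of_unit_or_unit {R : Type*} [Ring R] [Nontrivial R]
    (h : ∀ a : R, IsUnit a ∨ IsUnit (1 - a)) : IsLocalRing R := by
  refine ⟨fun {a b} hab => ?_⟩
  rcases h a with ha | ha
  · exact Or.inl ha
  · right
    have : b = 1 - a := by rw [← hab]; abel
    rwa [← this] at ha

theorem isIso_of_end_isUnit {X : C} {f : CategoryTheory.End X} (h : IsUnit f) :
    IsIso f :=
  (isUnit_iff_isIso f).1 h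

/-- An object with local endomorphism ring is indecomposable. -/
theorem indec_of_local (X : C) (h : IsLocalRing (CategoryTheory.End X)) :
    IsIndecomposableObj C X := by
  constructor
  · intro hz
    have h1 : (𝟙 X : X ⟶ X) = 0 := (Limits.IsZero.iff_id_eq_zero X).1 hz
    have h2 : (1 : CategoryTheory.End X) = 0 := h1
    exact one_ne_zero h2
  · intro e he
    let a : CategoryTheory.End X := e
    have he' : a * a = a := he
    rcases localRing_unit_or_unit a with hu | hu
    · right
      have h3 : a = 1 := (hu.mul_left_cancel (by rw [mul_one, he'])).symm
      exact h3
    · left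
      have hone : (1 - a) * (1 - a) = 1 - a := by
        have h4 : (1 - a) * (1 - a) = 1 - a - a + a * a := by noncomm_ring
        rw [h4, he']; noncomm_ring
      have h5 : 1 - a = 1 := (hu.mul_left_cancel (by rw [mul_one, hone])).symm
      have h6 : a = 0 := by
        have h7 : a = 1 - (1 - a) := by noncomm_ring
        rw [h7, h5, sub_self]
      exact h6

/-- The endomorphism ring of an indecomposable object in a Krull–Schmidt category is local. -/
theorem end_local_of_indec (hKS : IsKrullSchmidt C) (X : C) (hX : IsIndecomposableObj C X) :
    IsLocalRing (CategoryTheory.End X) := by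
  obtain ⟨n, Y, hloc, p, s, hsp, hortho, hsum⟩ := hKS X
  -- the idempotents p i ≫ s i
  have hid : ∀ i, (p i ≫ s i) ≫ (p i ≫ s i) = p i ≫ s i := by
    intro i
    rw [Category.assoc, ← Category.assoc (s i) (p i), hsp i, Category.id_comp]
  have htr : ∀ i, p i ≫ s i = 0 ∨ p i ≫ s i = 𝟙 X := fun i => hX.2 _ (hid i)
  have hex : ∃ j, p j ≫ s j = 𝟙 X := by
    by_contra hc
    push_neg at hc
    have hall : ∀ i, p i ≫ s i = 0 := fun i => (htr i).resolve_right (hc i)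
    have : (𝟙 X : X ⟶ X) = 0 := by
      rw [← hsum]
      exact Finset.sum_eq_zero fun i _ => hall i
    exact hX.1 ((Limits.IsZero.iff_id_eq_zero X).2 this)
  obtain ⟨j, hj⟩ := hex
  -- ring equivalence End X ≃+* End (Y j)
  let φ : CategoryTheory.End X ≃+* CategoryTheory.End (Y j) :=
    { toFun := fun a => s j ≫ a ≫ p j
      invFun := fun b => p j ≫ b ≫ s j
      left_inv := by
        intro a
        show p j ≫ (s j ≫ a ≫ p j) ≫ s j = a
        calc p j ≫ (s j ≫ a ≫ p j) ≫ s j = (p j ≫ s j) ≫ a ≫ (p j ≫ s j) := by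
              simp only [Category.assoc]
          _ = a := by rw [hj]; simp
      right_inv := by
        intro b
        show s j ≫ (p j ≫ b ≫ s j) ≫ p j = b
        calc s j ≫ (p j ≫ b ≫ s j) ≫ p j = (s j ≫ p j) ≫ b ≫ (s j ≫ p j) := by
              simp only [Category.assoc]
          _ = b := by rw [hsp j]; simp
      map_mul' := by
        intro a b
        show s j ≫ (b ≫ a) ≫ p j = (s j ≫ b ≫ p j) ≫ (s j ≫ a ≫ p j)
        calc s j ≫ (b ≫ a) ≫ p j = s j ≫ b ≫ 𝟙 X ≫ a ≫ p j := by
              simp only [Category.assoc, Category.id_comp]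
          _ = s j ≫ b ≫ (p j ≫ s j) ≫ a ≫ p j := by rw [hj]
          _ = (s j ≫ b ≫ p j) ≫ (s j ≫ a ≫ p j) := by simp only [Category.assoc]
      map_add' := by
        intro a b
        show s j ≫ (a + b) ≫ p j = s j ≫ a ≫ p j + s j ≫ b ≫ p j
        rw [Preadditive.add_comp, Preadditive.comp_add] }
  haveI := hloc j
  haveI hnt : Nontrivial (CategoryTheory.End X) := φ.toEquiv.nontrivial
  refine localRing_of_unit_or_unit fun a => ?_
  rcases localRing_unit_or_unit (φ a) with hu | hu
  · left
    have h9 : IsUnit (φ.symm (φ a)) := hu.map φ.symm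
    rwa [RingEquiv.symm_apply_apply] at h9
  · right
    have h1 : φ (1 - a) = 1 - φ a := by rw [map_sub, map_one]
    have h9 : IsUnit (φ.symm (φ (1 - a))) := by rw [h1]; exact hu.map φ.symm
    rwa [RingEquiv.symm_apply_apply] at h9

/-- A morphism with a right inverse between indecomposables is invertible. -/
theorem isIso_of_retract {X Y : C} (hX : IsIndecomposableObj C X) (hY : IsIndecomposableObj C Y)
    (f : X ⟶ Y) (r : Y ⟶ X) (hfr : f ≫ r = 𝟙 X) : IsIso f := by
  have he : (r ≫ f) ≫ (r ≫ f) = r ≫ f := by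
    rw [Category.assoc, ← Category.assoc f r, hfr, Category.id_comp]
  rcases hY.2 _ he with h0 | h1
  · exfalso
    have : (𝟙 X : X ⟶ X) = 0 := by
      calc (𝟙 X : X ⟶ X) = (f ≫ r) ≫ (f ≫ r) := by rw [hfr]; simp
        _ = f ≫ (r ≫ f) ≫ r := by simp only [Category.assoc]
        _ = 0 := by rw [h0]; simp
    exact hX.1 ((Limits.IsZero.iff_id_eq_zero X).2 this)
  · exact ⟨r, hfr, h1⟩

/-- Non-invertible morphisms between indecomposables lie in the regular ideal. -/
theorem rad_le_reg (hKS : IsKrullSchmidt C) : catRadical C ≤ regIdeal C := by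
  refine CatIdeal.span_le ?_
  rintro X Y f ⟨hX, hY, hni⟩ g
  have hloc : IsLocalRing (CategoryTheory.End X) := end_local_of_indec hKS X hX
  haveI := hloc
  rcases localRing_unit_or_unit (show CategoryTheory.End X from f ≫ g) with hu | hu
  · exfalso
    have hiso : IsIso (f ≫ g) := isIso_of_end_isUnit hu
    have hfr : f ≫ (g ≫ inv (f ≫ g)) = 𝟙 X := by
      rw [← Category.assoc, IsIso.hom_inv_id]
    exact hni (isIso_of_retract hX hY f _ hfr)
  · exact isIso_of_end_isUnit hu

/-- Identities in the radical force the object to be zero. -/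
theorem id_eq_zero_of_mem_rad (hKS : IsKrullSchmidt C) {X : C}
    (h : (catRadical C).mem (𝟙 X)) : (𝟙 X : X ⟶ X) = 0 := by
  have hreg := rad_le_reg hKS h
  have h0 : IsIso (0 : X ⟶ X) := by
    have h1 := hreg (𝟙 X)
    rwa [Category.comp_id, sub_self] at h1
  haveI := h0
  rw [← IsIso.hom_inv_id (0 : X ⟶ X), Limits.zero_comp]

end AuxLocal
section AuxStab
open CategoryTheory Ordinal

variable {C : Type u} [Category.{v} C] [Preadditive C]

/-- Local stabilization of an antitone chain of ideals over any nonempty class of ordinals. -/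
theorem locStab (hdcc : HasLocalDCC C) (g : Ordinal.{w} → CatIdeal C)
    (hg : ∀ β γ : Ordinal.{w}, β ≤ γ → g γ ≤ g β) (X Y : C) (p : Ordinal.{w} → Prop)
    (hne : ∃ β, p β) :
    ∃ β₀, p β₀ ∧ ∀ β, p β → β₀ ≤ β → ∀ f : X ⟶ Y, (g β).mem f ↔ (g β₀).mem f := by
  by_contra hcon
  push_neg at hcon
  have hstep : ∀ β₀, p β₀ → ∃ β, p β ∧ β₀ ≤ β ∧ ∃ f : X ⟶ Y, ¬((g β).mem f ↔ (g β₀).mem f) := by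
    intro β₀ h0
    obtain ⟨β, h1, h2, f, h3⟩ := hcon β₀ h0
    exact ⟨β, h1, h2, f, by tauto⟩
  choose! nxt hp hle wit hwit using hstep
  obtain ⟨b0, hb0⟩ := hne
  let seq : ℕ → Ordinal.{w} := fun n => Nat.rec b0 (fun _ b => nxt b) n
  have hseqp : ∀ n, p (seq n) := by
    intro n
    induction n with
    | zero => exact hb0
    | succ n ih => exact hp _ ih
  have hseqle : ∀ n, seq n ≤ seq (n + 1) := fun n => hle _ (hseqp n)
  obtain ⟨n, hn⟩ := hdcc (fun n => g (seq n)) (fun n => hg _ _ (hseqle n)) X Y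
  have h1 := hn (n + 1) (Nat.le_succ n) (wit (seq n))
  exact hwit _ (hseqp n) h1

/-- Global stabilization: an ordinal-indexed antitone chain of ideals in an essentially
small category with the local DCC is eventually constant. -/
theorem globStab [EssentiallySmall.{v} C] (hdcc : HasLocalDCC C)
    (g : Ordinal.{v} → CatIdeal C) (hg : ∀ β γ : Ordinal.{v}, β ≤ γ → g γ ≤ g β) :
    ∃ A : Ordinal.{v}, ∀ β, A ≤ β → g β = g A := by
  classical
  let D := SmallModel C
  let E := equivSmallModel C
  have hpair : ∀ q : D × D, ∃ β₀ : Ordinal.{v}, ∀ β, β₀ ≤ β →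
      ∀ f : E.inverse.obj q.1 ⟶ E.inverse.obj q.2, (g β).mem f ↔ (g β₀).mem f := by
    intro q
    obtain ⟨β₀, _, h⟩ := locStab hdcc g hg (E.inverse.obj q.1) (E.inverse.obj q.2)
      (fun _ => True) ⟨0, trivial⟩
    exact ⟨β₀, fun β hβ f => h β trivial hβ f⟩
  choose β₀ hβ₀ using hpair
  refine ⟨iSup β₀, fun β hβ => ?_⟩
  refine CatIdeal.ext' fun X Y f => ?_
  set q : D × D := (E.functor.obj X, E.functor.obj Y) with hq
  have hA : β₀ q ≤ iSup β₀ := le_ciSup (Ordinal.bddAbove_range β₀) q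
  have key : ∀ γ : Ordinal.{v}, β₀ q ≤ γ → ((g γ).mem f ↔ (g (β₀ q)).mem f) := by
    intro γ hγ
    have hconj := (g γ).mem_iff_conj (E.unitIso.app X) (E.unitIso.app Y) f
    have hconj0 := (g (β₀ q)).mem_iff_conj (E.unitIso.app X) (E.unitIso.app Y) f
    rw [hconj, hconj0]
    exact hβ₀ q γ hγ _
  rw [key β (le_trans hA hβ), key (iSup β₀) hA]

theorem limit_omega_mul (A : Ordinal.{w}) : Order.IsSuccLimit (Ordinal.omega0 * (A + 1)) :=
  isSuccLimit_mul_left isSuccLimit_omega0 (by simpa using Ordinal.succ_ne_zero A)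

theorem le_omega_mul (A : Ordinal.{w}) : A ≤ Ordinal.omega0 * (A + 1) :=
  le_trans (le_self_add (a := A) (b := 1)) (Ordinal.le_mul_right (A + 1) omega0_pos)

theorem omega_le_omega_mul (A : Ordinal.{w}) : Ordinal.omega0 ≤ Ordinal.omega0 * (A + 1) :=
  Ordinal.le_mul_left Ordinal.omega0 (by simpa using Ordinal.succ_ne_zero A)

theorem limitPart_succ_omega_mul (γ : Ordinal.{w}) :
    CatIdeal.limitPart (Order.succ (Ordinal.omega0 * γ)) = Ordinal.omega0 * γ := by
  unfold CatIdeal.limitPart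
  rw [← Ordinal.add_one_eq_succ, Ordinal.mul_add_div γ Ordinal.omega0_ne_zero,
    Ordinal.div_eq_zero_of_lt Ordinal.one_lt_omega0, add_zero]

end AuxStab
section AuxMain
open CategoryTheory CategoryTheory.Limits Ordinal CatIdeal

variable {C : Type u} [Category.{v} C] [Preadditive C]

/-- Krull–Schmidt base case: every ideal is contained in the sum of the ideal generated
by the identities it contains and its intersection with the radical. -/
theorem base_step (hKS : IsKrullSchmidt C) (I : CatIdeal C) :
    I ≤ (identityIdeal C {X : C | I.mem (𝟙 X)}).addI (I.interI (catRadical C)) := by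
  rw [CatIdeal.le_def]
  intro X Y f hf
  obtain ⟨m, XX, hlocX, pX, sX, hspX, _, hsumX⟩ := hKS X
  obtain ⟨n, YY, hlocY, pY, sY, hspY, _, hsumY⟩ := hKS Y
  set W := (identityIdeal C {X : C | I.mem (𝟙 X)}).addI (I.interI (catRadical C)) with hW
  have hdecomp : f = ∑ i, ∑ j, pX i ≫ (sX i ≫ f ≫ pY j) ≫ sY j := by
    calc f = (∑ i, pX i ≫ sX i) ≫ f ≫ (∑ j, pY j ≫ sY j) := by
          rw [hsumX, hsumY]; simp
      _ = ∑ i, ∑ j, pX i ≫ (sX i ≫ f ≫ pY j) ≫ sY j := by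
          rw [Preadditive.sum_comp]
          refine Finset.sum_congr rfl fun i _ => ?_
          rw [Preadditive.comp_sum, Preadditive.comp_sum]
          refine Finset.sum_congr rfl fun j _ => ?_
          simp only [Category.assoc]
  rw [hdecomp]
  refine CatIdeal.mem_of_sum _ _ fun i _ => CatIdeal.mem_of_sum _ _ fun j _ => ?_
  have hfijI : I.mem (sX i ≫ f ≫ pY j) :=
    I.comp_mem_right (sX i) (I.comp_mem_left (pY j) hf)
  by_cases hiso : IsIso (sX i ≫ f ≫ pY j)
  · have hid : I.mem (𝟙 (XX i)) := by
      have h1 := I.comp_mem_left (inv (sX i ≫ f ≫ pY j)) hfijI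
      rwa [IsIso.hom_inv_id] at h1
    have hT : (identityIdeal C {X : C | I.mem (𝟙 X)}).mem (𝟙 (XX i)) :=
      CatIdeal.subset_span ⟨rfl, hid, (eqToHom_refl _ rfl).symm⟩
    have h1 := (identityIdeal C {X : C | I.mem (𝟙 X)}).comp_mem_left
      ((sX i ≫ f ≫ pY j) ≫ sY j) hT
    rw [Category.id_comp] at h1
    have h2 := (identityIdeal C {X : C | I.mem (𝟙 X)}).comp_mem_right (pX i) h1
    exact le_addI_left _ _ h2
  · have hXi : IsIndecomposableObj C (XX i) := indec_of_local _ (hlocX i)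
    have hYj : IsIndecomposableObj C (YY j) := indec_of_local _ (hlocY j)
    have hrad : (catRadical C).mem (sX i ≫ f ≫ pY j) :=
      CatIdeal.subset_span ⟨hXi, hYj, hiso⟩
    have h1 : (I.interI (catRadical C)).mem (sX i ≫ f ≫ pY j) := ⟨hfijI, hrad⟩
    have h2 := (I.interI (catRadical C)).comp_mem_left (sY j) h1
    have h3 := (I.interI (catRadical C)).comp_mem_right (pX i) h2
    exact le_addI_right _ _ h3

/-- The transfinite refinement: for an idempotent ideal `I` and every ordinal `α`,
`I ≤ ⟨identities of I⟩ + (I ∩ rad^α)`. -/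
theorem key_le (hKS : IsKrullSchmidt C) (hdcc : HasLocalDCC C) (I : CatIdeal C)
    (hI : I.IsIdempotent) (α : Ordinal.{v}) :
    I ≤ (identityIdeal C {X : C | I.mem (𝟙 X)}).addI
      (I.interI (CatIdeal.tpow (catRadical C) α)) := by
  induction α using Ordinal.induction with
  | h α IH =>
    rcases Ordinal.zero_or_succ_or_isSuccLimit α with rfl | ⟨a, rfl⟩ | hlim
    · rw [tpow_zero]
      exact fun {X Y f} hf => le_addI_right _ _ ⟨hf, trivial⟩
    · rcases eq_or_ne a 0 with rfl | ha
      · rw [Ordinal.succ_zero, tpow_one]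
        exact base_step hKS I
      · have h3 : ((I.interI (CatIdeal.tpow (catRadical C) a)).mul
            (I.interI (CatIdeal.tpow (catRadical C) a))) ≤
            I.interI (CatIdeal.tpow (catRadical C) (Order.succ a)) := by
          refine span_le ?_
          rintro X Y f ⟨Z, g, h, hg, hh, rfl⟩
          refine ⟨I.comp_mem_left h hg.1, ?_⟩
          rw [tpow_succ _ (Ordinal.succ_ne_zero a) (Order.not_isSuccLimit_succ a), pred_succ]
          refine comp_mem_mul hg.2 ?_
          by_cases hω : Ordinal.omega0 ≤ Order.succ a
          · rw [if_pos hω]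
            exact tpow_antitone _ (Order.lt_succ_iff.1
              (CatIdeal.limitPart_lt (Ordinal.succ_ne_zero a) (Order.not_isSuccLimit_succ a))) hh.2
          · rw [if_neg hω]
            have h4 : (CatIdeal.tpow (catRadical C) 1).mem h :=
              tpow_antitone _ (Ordinal.one_le_iff_ne_zero.2 ha) hh.2
            rwa [tpow_one] at h4
        rw [CatIdeal.le_def]
        intro X Y f hf
        have h0 : (I.mul I).mem f := by rw [← hI]; exact hf
        have h1 := CatIdeal.le_def.1
          (mul_mono (IH a (Order.lt_succ a)) (IH a (Order.lt_succ a))) X Y f h0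
        have h2 := CatIdeal.le_def.1 (mul_addI_sq _ _) X Y f h1
        obtain ⟨g, h, hgT, hK2, rfl⟩ := h2
        exact ⟨g, h, hgT, CatIdeal.le_def.1 h3 _ _ _ hK2, rfl⟩
    · rw [CatIdeal.le_def]
      intro X Y f hf
      have hanti : ∀ β γ : Ordinal.{v}, β ≤ γ →
          I.interI (CatIdeal.tpow (catRadical C) γ) ≤
          I.interI (CatIdeal.tpow (catRadical C) β) := fun β γ h =>
        le_interI (interI_le_left _ _) (CatIdeal.le_trans' (interI_le_right _ _)
          (tpow_antitone _ h))
      obtain ⟨β₀, hβ₀lt, hstb⟩ := locStab hdcc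
        (fun β => I.interI (CatIdeal.tpow (catRadical C) β)) hanti X Y
        (fun β => β < α) ⟨0, hlim.pos⟩
      obtain ⟨g, h, hgT, ⟨hhI, hht⟩, rfl⟩ := IH β₀ hβ₀lt hf
      refine ⟨g, h, hgT, ⟨hhI, mem_tpow_limit hlim ?_⟩, rfl⟩
      intro β hβ
      rcases le_or_gt β β₀ with hb | hb
      · exact tpow_antitone _ hb hht
      · exact ((hstb β hβ (le_of_lt hb) h).2 ⟨hhI, hht⟩).2

/-- Reverse direction of the main theorem. -/
theorem reverse_dir (hKS : IsKrullSchmidt C) (hdcc : HasLocalDCC C)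
    (hz : (catTransRadical C).IsZeroIdeal) (I : CatIdeal C) (hI : I.IsIdempotent) :
    ∃ S : Set C, I = identityIdeal C S := by
  refine ⟨{X : C | I.mem (𝟙 X)}, CatIdeal.le_antisymm' ?_ ?_⟩
  · rw [CatIdeal.le_def]
    intro X Y f hf
    have hanti : ∀ β γ : Ordinal.{v}, β ≤ γ →
        I.interI (CatIdeal.tpow (catRadical C) γ) ≤
        I.interI (CatIdeal.tpow (catRadical C) β) := fun β γ h =>
      le_interI (interI_le_left _ _) (CatIdeal.le_trans' (interI_le_right _ _) (tpow_antitone _ h))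
    obtain ⟨β₀, -, hstb⟩ := locStab hdcc
      (fun β => I.interI (CatIdeal.tpow (catRadical C) β)) hanti X Y
      (fun _ => True) ⟨0, trivial⟩
    obtain ⟨g, h, hgT, ⟨hhI, hht⟩, rfl⟩ := key_le hKS hdcc I hI β₀ hf
    have htst : (catTransRadical C).mem h := by
      intro β
      rcases le_or_gt β β₀ with hb | hb
      · exact tpow_antitone _ hb hht
      · exact ((hstb β trivial (le_of_lt hb) h).2 ⟨hhI, hht⟩).2
    have h0 : h = 0 := hz htst
    rw [h0, add_zero]
    exact hgT
  · refine span_le ?_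
    rintro X Y f ⟨rfl, hS, rfl⟩
    rw [eqToHom_refl]
    exact hS

/-- Forward direction of the main theorem. -/
theorem forward_dir [EssentiallySmall.{v} C] (hKS : IsKrullSchmidt C) (hdcc : HasLocalDCC C)
    (H : ∀ I : CatIdeal C, I.IsIdempotent → ∃ S : Set C, I = identityIdeal C S) :
    (catTransRadical C).IsZeroIdeal := by
  obtain ⟨A, hA⟩ := globStab hdcc (CatIdeal.tpow (catRadical C))
    (fun β γ h => tpow_antitone _ h)
  set α := Ordinal.omega0 * (A + 1) with hα
  have hαA : A ≤ α := le_omega_mul A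
  have hstab : ∀ β, α ≤ β → CatIdeal.tpow (catRadical C) β =
      CatIdeal.tpow (catRadical C) α := by
    intro β hβ
    rw [hA β (le_trans hαA hβ), hA α hαA]
  have htst : catTransRadical C = CatIdeal.tpow (catRadical C) α := by
    refine CatIdeal.le_antisymm' (tstar_le_tpow _ α) ?_
    intro X Y f hf
    intro β
    rcases le_or_gt β α with hb | hb
    · exact tpow_antitone _ hb hf
    · show ((catRadical C).tpow β).mem f
      rw [hstab β (le_of_lt hb)]
      exact hf
  have hsucc : CatIdeal.tpow (catRadical C) (Order.succ α) =
      (CatIdeal.tpow (catRadical C) α).mul (CatIdeal.tpow (catRadical C) α) := by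
    rw [tpow_succ _ (Ordinal.succ_ne_zero α) (Order.not_isSuccLimit_succ α), pred_succ,
      if_pos (le_trans (omega_le_omega_mul A) (le_of_lt (Order.lt_succ α))),
      hα, limitPart_succ_omega_mul]
  have hidem : (catTransRadical C).IsIdempotent := by
    show catTransRadical C = (catTransRadical C).mul (catTransRadical C)
    rw [htst, ← hsucc, hstab _ (le_of_lt (Order.lt_succ α))]
  obtain ⟨S, hS⟩ := H _ hidem
  have hid0 : ∀ X ∈ S, (𝟙 X : X ⟶ X) = 0 := by
    intro X hX
    have h1 : (identityIdeal C S).mem (𝟙 X) :=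
      CatIdeal.subset_span ⟨rfl, hX, (eqToHom_refl _ rfl).symm⟩
    rw [← hS] at h1
    have h2 : (catRadical C).mem (𝟙 X) := by
      have h3 : ((catRadical C).tpow (1 : Ordinal.{v})).mem (𝟙 X) := h1 (1 : Ordinal.{v})
      rwa [tpow_one] at h3
    exact id_eq_zero_of_mem_rad hKS h2
  refine fun {X Y f} hf => ?_
  rw [hS] at hf
  have hzero : (CatIdeal.zeroI C).mem f := by
    refine span_le ?_ hf
    rintro A B g ⟨rfl, hA', rfl⟩
    show eqToHom rfl = (0 : A ⟶ A)
    rw [eqToHom_refl]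
    exact hid0 _ hA'
  exact hzero

end AuxMain
open CategoryTheory in
/-- Every idempotent ideal is generated by a set of identity morphisms iff
the transfinite radical vanishes. -/
theorem stmt9 {C : Type u} [CategoryTheory.Category.{v} C] [CategoryTheory.Preadditive C] [CategoryTheory.Limits.HasFiniteBiproducts C] [CategoryTheory.EssentiallySmall.{v} C] (hKS : IsKrullSchmidt C) (hdcc : HasLocalDCC C) :
    (∀ I : CatIdeal C, I.IsIdempotent → ∃ S : Set C, I = identityIdeal C S) ↔
      (catTransRadical C).IsZeroIdeal := by
  constructor
  · intro H
    exact forward_dir hKS hdcc H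
  · intro hz I hI
    exact reverse_dir hKS hdcc hz I hI
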